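/- For every J ∈ ℝ and n ∈ ℕ, the trigonometric interpolation operator ex_n : L_2(T_n^d) → H_J(T^d), defined by ex_n f = Σ_{k ∈ {-n,...,n}^d} ⟨f, ς_k⟩_n ς_k, is a bounded linear operator with ‖ex_n f‖²_{H_J} ≤ [(1+|n|²)^J ∨ 1] · ‖f‖²_n, and satisfies pr_n ∘ ex_n = id on L_2(T_n^d) and ex_n ∘ pr_n = pr_n on H_J(T^d). -/

import Mathlib

open scoped BigOperators
open Real

noncomputable section

/-- The discrete `d`-dimensional torus with `(2n+1)^d` points. -/
abbrev DTorus (d n : ℕ) := Fin d → ZMod (2 * n + 1)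

/-- Squared euclidean norm `|k|²` of a lattice vector `k ∈ ℤ^d`. -/
def latNormSq (d : ℕ) (k : Fin d → ℤ) : ℝ := ∑ j, ((k j : ℝ)) ^ 2

/-- Sobolev weight `(1+|k|²)^J`. -/
def sobWeight (d : ℕ) (J : ℝ) (k : Fin d → ℤ) : ℝ := (1 + latNormSq d k) ^ J

/-- Squared Sobolev norm of an element of `H_J(T^d)` represented by its Fourier
coefficient sequence. -/
def sobNormSq (d : ℕ) (J : ℝ) (c : (Fin d → ℤ) → ℂ) : ℝ :=
  ∑' k, sobWeight d J k * ‖c k‖ ^ 2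

/-- Sobolev norm. -/
def sobNorm (d : ℕ) (J : ℝ) (c : (Fin d → ℤ) → ℂ) : ℝ := Real.sqrt (sobNormSq d J c)

/-- The character `ς_k(y) = e^{i k·y}`. -/
def charFun (d : ℕ) (k : Fin d → ℤ) (y : Fin d → ℝ) : ℂ :=
  Complex.exp (Complex.I * (∑ j, (k j : ℝ) * y j))

/-- The point of `T^d` corresponding to a lattice point of the discrete torus. -/
def discPt (d n : ℕ) (x : DTorus d n) : Fin d → ℝ :=
  fun j => 2 * π * ((x j).val : ℝ) / (2 * (n : ℝ) + 1)

/-- Normalized discrete inner product on `L_2(T_n^d)` (complex-valued version). -/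
def dInner (d n : ℕ) (f g : DTorus d n → ℂ) : ℂ :=
  (((2 * (n : ℝ) + 1) ^ d : ℝ) : ℂ)⁻¹ * ∑ x : DTorus d n, f x * (starRingEnd ℂ) (g x)

/-- Squared discrete `L²` norm `‖f‖²_n`. -/
def dNormSq (d n : ℕ) (f : DTorus d n → ℂ) : ℝ :=
  ((2 * (n : ℝ) + 1) ^ d)⁻¹ * ∑ x : DTorus d n, ‖f x‖ ^ 2

/-- Fourier coefficient sequence of the trigonometric interpolation
`ex_n f = Σ_{k ∈ {-n,…,n}^d} ⟨f, ς_k⟩_n ς_k`. -/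
def exCoef (d n : ℕ) (f : DTorus d n → ℂ) : (Fin d → ℤ) → ℂ :=
  fun k => if ∀ j, |k j| ≤ (n : ℤ) then
    dInner d n f (fun x => charFun d k (discPt d n x)) else 0

/-- Truncation of a coefficient sequence to the cube `{-n,…,n}^d` (i.e. `pr_n`). -/
def trunc (d n : ℕ) (c : (Fin d → ℤ) → ℂ) : (Fin d → ℤ) → ℂ :=
  fun k => if ∀ j, |k j| ≤ (n : ℤ) then c k else 0

/-- The cube `{-n,…,n}^d ⊂ ℤ^d`. -/
def cube (d n : ℕ) : Finset (Fin d → ℤ) :=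
  Fintype.piFinset fun _ => Finset.Icc (-(n : ℤ)) (n : ℤ)

/-- The restriction of the Fourier projection `pr_n g` to the discrete torus. -/
def prDisc (d n : ℕ) (c : (Fin d → ℤ) → ℂ) : DTorus d n → ℂ :=
  fun x => ∑ k ∈ cube d n, c k * charFun d k (discPt d n x)

/-- `L²(T^d)` inner product in Fourier coordinates. -/
def seqInner (d : ℕ) (c₁ c₂ : (Fin d → ℤ) → ℂ) : ℂ :=
  ∑' k, c₁ k * (starRingEnd ℂ) (c₂ k)

namespace ExAux

def ζ (n : ℕ) (m : ℤ) : ℂ := Complex.exp (2 * π * Complex.I * m / (2 * n + 1))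

lemma Nc_ne (n : ℕ) : (2 * (n:ℂ) + 1) ≠ 0 := by
  intro h
  have := congrArg Complex.re h
  simp at this
  nlinarith [this]

lemma two_pi_I_ne : (2 * (π:ℂ) * Complex.I) ≠ 0 := by
  simp [Real.pi_ne_zero, Complex.I_ne_zero, Complex.ofReal_ne_zero]

lemma ζ_mul (n : ℕ) (a b : ℤ) : ζ n a * ζ n b = ζ n (a + b) := by
  rw [ζ, ζ, ζ, ← Complex.exp_add]
  congr 1
  push_cast
  ring

lemma ζ_pow (n : ℕ) (m : ℤ) (a : ℕ) : ζ n m ^ a = ζ n (m * a) := by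
  rw [ζ, ζ, ← Complex.exp_nat_mul]
  congr 1
  have h := Nc_ne n
  field_simp
  push_cast
  ring

lemma ζ_zpow (n : ℕ) (m c : ℤ) : ζ n m ^ c = ζ n (m * c) := by
  rw [ζ, ζ, ← Complex.exp_int_mul]
  congr 1
  have h := Nc_ne n
  field_simp
  push_cast
  ring

lemma ζ_conj (n : ℕ) (m : ℤ) : (starRingEnd ℂ) (ζ n m) = ζ n (-m) := by
  rw [ζ, ζ, ← Complex.exp_conj]
  congr 1
  simp only [map_div₀, map_mul, map_ofNat, Complex.conj_I, Complex.conj_ofReal, map_intCast,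
    map_add, map_one, map_natCast]
  push_cast
  ring

lemma ζ_ne_zero (n : ℕ) (m : ℤ) : ζ n m ≠ 0 := Complex.exp_ne_zero _

lemma ζ_eq_one_iff (n : ℕ) (m : ℤ) : ζ n m = 1 ↔ ((2 * (n:ℤ) + 1)) ∣ m := by
  rw [ζ, Complex.exp_eq_one_iff]
  constructor
  · rintro ⟨k, hk⟩
    refine ⟨k, ?_⟩
    have h := Nc_ne n
    field_simp at hk
    have hm : (m : ℂ) = (2 * n + 1) * k := by
      have h1 : (2*π*Complex.I) * (m:ℂ) = (2*π*Complex.I) * (((2:ℂ)*n+1)*k) := by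
        linear_combination (2*π*Complex.I) * hk
      exact mul_left_cancel₀ two_pi_I_ne h1
    exact_mod_cast hm
  · rintro ⟨k, hk⟩
    refine ⟨k, ?_⟩
    subst hk
    have h := Nc_ne n
    push_cast
    field_simp

lemma ζ_pow_N (n : ℕ) (m : ℤ) : ζ n m ^ (2 * n + 1) = 1 := by
  rw [ζ_pow, ζ_eq_one_iff]
  exact ⟨m, by push_cast; ring⟩

lemma geom (N : ℕ) (z : ℂ) (hz : z ^ N = 1) :
    ∑ i ∈ Finset.range N, z ^ i = if z = 1 then (N : ℂ) else 0 := by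
  split_ifs with h
  · simp [h]
  · rw [geom_sum_eq h, hz]
    simp

lemma sum_zmod (n : ℕ) (z : ℂ) (hz : z ^ (2 * n + 1) = 1) :
    ∑ t : ZMod (2 * n + 1), z ^ t.val = if z = 1 then ((2 * n + 1 : ℕ) : ℂ) else 0 := by
  rw [← geom (2 * n + 1) z hz]
  haveI : NeZero (2 * n + 1) := ⟨by omega⟩
  apply Finset.sum_nbij' (fun t => ZMod.val t) (fun i : ℕ => (i : ZMod (2 * n + 1)))
  · intro t _; exact Finset.mem_range.mpr (ZMod.val_lt t)
  · intro i _; exact Finset.mem_univ _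
  · intro t _; exact ZMod.natCast_rightInverse t
  · intro i hi; exact ZMod.val_cast_of_lt (Finset.mem_range.mp hi)
  · intro t _; rfl

lemma sum_Icc (n : ℕ) (w : ℂ) (hw : w ≠ 0) (hw1 : w ^ (2 * n + 1) = 1) :
    ∑ m ∈ Finset.Icc (-(n:ℤ)) n, w ^ m = if w = 1 then ((2 * n + 1 : ℕ) : ℂ) else 0 := by
  have key : ∑ m ∈ Finset.Icc (-(n:ℤ)) n, w ^ m
      = w ^ (-(n:ℤ)) * ∑ i ∈ Finset.range (2 * n + 1), w ^ i := by
    rw [Finset.mul_sum]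
    apply Finset.sum_nbij' (fun m : ℤ => (m + n).toNat) (fun i : ℕ => (i : ℤ) - n)
    · intro m hm
      simp only [Finset.mem_Icc] at hm
      simp only [Finset.mem_range]
      omega
    · intro i hi
      simp only [Finset.mem_range] at hi
      simp only [Finset.mem_Icc]
      omega
    · intro m hm; simp only [Finset.mem_Icc] at hm; omega
    · intro i hi; simp only [Finset.mem_range] at hi; omega
    · intro m hm
      simp only [Finset.mem_Icc] at hm
      rw [← zpow_natCast w, ← zpow_add₀ hw]
      congr 1
      omega
  rw [key, geom _ _ hw1]
  split_ifs with h
  · simp [h]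
  · simp

/-- characters at discrete points in terms of `ζ`. -/
lemma charFun_discPt (d n : ℕ) (k : Fin d → ℤ) (x : DTorus d n) :
    charFun d k (discPt d n x) = ∏ j, ζ n (k j) ^ (x j).val := by
  have step : ∀ j : Fin d, ζ n (k j) ^ (x j).val
      = Complex.exp (2 * π * Complex.I * ((k j : ℂ) * ((x j).val : ℂ)) / (2 * n + 1)) := by
    intro j
    rw [ζ_pow, ζ]
    congr 2
    push_cast
    ring
  simp only [step]
  rw [← Complex.exp_sum, charFun]
  congr 1
  unfold discPt
  push_cast
  rw [Finset.mul_sum]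
  exact Finset.sum_congr rfl fun j _ => by ring

lemma conj_charFun (d n : ℕ) (k : Fin d → ℤ) (x : DTorus d n) :
    (starRingEnd ℂ) (charFun d k (discPt d n x)) = ∏ j, ζ n (-(k j)) ^ (x j).val := by
  rw [charFun_discPt, map_prod]
  exact Finset.prod_congr rfl fun j _ => by rw [map_pow, ζ_conj]

lemma mem_cube_iff (d n : ℕ) (k : Fin d → ℤ) :
    k ∈ cube d n ↔ ∀ j, |k j| ≤ (n : ℤ) := by
  rw [cube, Fintype.mem_piFinset]
  exact forall_congr' fun j => by rw [Finset.mem_Icc, abs_le]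

/-- orthogonality over the discrete torus -/
lemma sum_x (d n : ℕ) (k : Fin d → ℤ) :
    ∑ x : DTorus d n, ∏ j, ζ n (k j) ^ (x j).val
      = if ∀ j, (2 * (n:ℤ) + 1) ∣ k j then ((2 * n + 1 : ℕ) : ℂ) ^ d else 0 := by
  have hps := Finset.prod_univ_sum (fun _ : Fin d => (Finset.univ : Finset (ZMod (2*n+1))))
    (fun j t => ζ n (k j) ^ t.val)
  rw [Fintype.piFinset_univ] at hps
  rw [← hps]
  have h1 : ∀ j : Fin d, ∑ t : ZMod (2*n+1), ζ n (k j) ^ t.val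
      = if (2*(n:ℤ)+1) ∣ k j then ((2*n+1:ℕ):ℂ) else 0 := by
    intro j
    rw [sum_zmod n _ (ζ_pow_N n (k j))]
    congr 1
    rw [eq_iff_iff]
    exact ζ_eq_one_iff n (k j)
  simp only [h1]
  by_cases h : ∀ j, (2*(n:ℤ)+1) ∣ k j
  · rw [if_pos h]
    rw [Finset.prod_congr rfl (fun j _ => if_pos (h j)), Finset.prod_const]
    simp
  · rw [if_neg h]
    push_neg at h
    obtain ⟨j, hj⟩ := h
    exact Finset.prod_eq_zero (Finset.mem_univ j) (if_neg hj)

/-- orthogonality over the cube -/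
lemma sum_k (d n : ℕ) (x y : DTorus d n) :
    ∑ k ∈ cube d n, (∏ j, ζ n (k j) ^ (x j).val) * (∏ j, ζ n (-(k j)) ^ (y j).val)
      = if x = y then ((2 * n + 1 : ℕ) : ℂ) ^ d else 0 := by
  haveI : NeZero (2 * n + 1) := ⟨by omega⟩
  have comb : ∀ k : Fin d → ℤ, (∏ j, ζ n (k j) ^ (x j).val) * (∏ j, ζ n (-(k j)) ^ (y j).val)
      = ∏ j, (ζ n (k j) ^ (x j).val * ζ n (-(k j)) ^ (y j).val) := fun k =>
    (Finset.prod_mul_distrib).symm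
  simp only [comb]
  have hps := Finset.prod_univ_sum (fun _ : Fin d => Finset.Icc (-(n:ℤ)) (n:ℤ))
    (fun j m => ζ n m ^ (x j).val * ζ n (-m) ^ (y j).val)
  rw [cube, ← hps]
  have h1 : ∀ j : Fin d, ∑ m ∈ Finset.Icc (-(n:ℤ)) n, ζ n m ^ (x j).val * ζ n (-m) ^ (y j).val
      = if x j = y j then ((2*n+1:ℕ):ℂ) else 0 := by
    intro j
    have e : ∀ m : ℤ, ζ n m ^ (x j).val * ζ n (-m) ^ (y j).val
        = ζ n (((x j).val : ℤ) - ((y j).val : ℤ)) ^ m := by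
      intro m
      rw [ζ_pow, ζ_pow, ζ_mul, ζ_zpow]
      congr 1
      ring
    simp only [e]
    rw [sum_Icc n _ (ζ_ne_zero _ _) (ζ_pow_N _ _)]
    congr 1
    rw [eq_iff_iff, ζ_eq_one_iff]
    have hx := ZMod.val_lt (x j)
    have hy := ZMod.val_lt (y j)
    constructor
    · rintro ⟨c, hc⟩
      have hc0 : c = 0 := by
        rcases lt_trichotomy c 0 with h0 | h0 | h0
        · nlinarith [hc, hx, hy]
        · exact h0
        · nlinarith [hc, hx, hy]
      have : ((x j).val : ℤ) = ((y j).val : ℤ) := by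
        rw [hc0, mul_zero] at hc
        linarith
      have hv : (x j).val = (y j).val := by exact_mod_cast this
      calc x j = (((x j).val : ℕ) : ZMod (2*n+1)) := (ZMod.natCast_rightInverse _).symm
        _ = (((y j).val : ℕ) : ZMod (2*n+1)) := by rw [hv]
        _ = y j := ZMod.natCast_rightInverse _
    · intro h
      rw [h]
      simp
  simp only [h1]
  by_cases h : x = y
  · rw [if_pos h]
    rw [Finset.prod_congr rfl (fun j _ => if_pos (congrFun h j)), Finset.prod_const]
    simp
  · rw [if_neg h]
    have : ∃ j, x j ≠ y j := by
      by_contra hc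
      push_neg at hc
      exact h (funext hc)
    obtain ⟨j, hj⟩ := this
    exact Finset.prod_eq_zero (Finset.mem_univ j) (if_neg hj)

end ExAux
namespace ExAux

lemma const_eq (d n : ℕ) : (((2 * (n:ℝ) + 1) ^ d : ℝ) : ℂ) = ((2 * n + 1 : ℕ) : ℂ) ^ d := by
  push_cast; ring

lemma Ncd_ne (d n : ℕ) : ((2 * n + 1 : ℕ) : ℂ) ^ d ≠ 0 := by
  apply pow_ne_zero
  exact_mod_cast (Nat.succ_ne_zero (2*n))

lemma orth_x (d n : ℕ) (l k : Fin d → ℤ) :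
    ∑ x : DTorus d n, charFun d l (discPt d n x) * (starRingEnd ℂ) (charFun d k (discPt d n x))
      = if ∀ j, (2*(n:ℤ)+1) ∣ (l j - k j) then ((2*n+1:ℕ):ℂ)^d else 0 := by
  have e : ∀ x : DTorus d n, charFun d l (discPt d n x) * (starRingEnd ℂ) (charFun d k (discPt d n x))
      = ∏ j, ζ n (l j - k j) ^ (x j).val := by
    intro x
    rw [charFun_discPt, conj_charFun, ← Finset.prod_mul_distrib]
    exact Finset.prod_congr rfl fun j _ => by rw [← mul_pow, ζ_mul, ← sub_eq_add_neg]
  simp only [e]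
  exact sum_x d n _

lemma kern (d n : ℕ) (x y : DTorus d n) :
    ∑ k ∈ cube d n, charFun d k (discPt d n x) * (starRingEnd ℂ) (charFun d k (discPt d n y))
      = if x = y then ((2*n+1:ℕ):ℂ)^d else 0 := by
  rw [Finset.sum_congr rfl (fun k _ => by rw [charFun_discPt, conj_charFun])]
  exact sum_k d n x y

lemma dvd_small (n : ℕ) (a : ℤ) (ha : |a| ≤ 2*n) (h : (2*(n:ℤ)+1) ∣ a) : a = 0 := by
  rcases h with ⟨c, hc⟩
  rw [abs_le] at ha
  have hc0 : c = 0 := by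
    rcases lt_trichotomy c 0 with h0 | h0 | h0
    · nlinarith
    · exact h0
    · nlinarith
  rw [hc, hc0, mul_zero]

lemma dInner_add (d n : ℕ) (f g h : DTorus d n → ℂ) :
    dInner d n (f + g) h = dInner d n f h + dInner d n g h := by
  simp only [dInner, Pi.add_apply, add_mul, Finset.sum_add_distrib, mul_add]

lemma dInner_smul (d n : ℕ) (a : ℂ) (f g : DTorus d n → ℂ) :
    dInner d n (a • f) g = a * dInner d n f g := by
  simp only [dInner, Pi.smul_apply, smul_eq_mul]
  rw [show (∑ x : DTorus d n, a * f x * (starRingEnd ℂ) (g x))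
      = a * ∑ x : DTorus d n, f x * (starRingEnd ℂ) (g x) by
    rw [Finset.mul_sum]; exact Finset.sum_congr rfl fun x _ => by ring]
  ring

lemma exCoef_cube (d n : ℕ) (f : DTorus d n → ℂ) (k : Fin d → ℤ) (hk : k ∈ cube d n) :
    exCoef d n f k = dInner d n f (fun y => charFun d k (discPt d n y)) :=
  if_pos ((mem_cube_iff d n k).mp hk)

lemma part3 (d n : ℕ) (f : DTorus d n → ℂ) : prDisc d n (exCoef d n f) = f := by
  funext x
  rw [prDisc, Finset.sum_congr rfl (fun k hk => by rw [exCoef_cube d n f k hk])]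
  simp only [dInner, Finset.sum_mul, Finset.mul_sum]
  rw [Finset.sum_comm]
  have inner : ∀ y : DTorus d n,
      (∑ k ∈ cube d n, (((2 * (n:ℝ) + 1) ^ d : ℝ) : ℂ)⁻¹ *
          (f y * (starRingEnd ℂ) (charFun d k (discPt d n y))) * charFun d k (discPt d n x))
      = (((2 * (n:ℝ) + 1) ^ d : ℝ) : ℂ)⁻¹ * (f y *
          ∑ k ∈ cube d n, charFun d k (discPt d n x) * (starRingEnd ℂ) (charFun d k (discPt d n y))) := by
    intro y
    rw [Finset.mul_sum, Finset.mul_sum]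
    exact Finset.sum_congr rfl fun k _ => by ring
  simp only [inner, kern, mul_ite, mul_zero]
  rw [Finset.sum_ite_eq]
  simp only [Finset.mem_univ, if_true]
  rw [const_eq, mul_comm (f x), ← mul_assoc, inv_mul_cancel₀ (Ncd_ne d n), one_mul]

lemma part4 (d n : ℕ) (c : (Fin d → ℤ) → ℂ) : exCoef d n (prDisc d n c) = trunc d n c := by
  funext k
  rw [exCoef, trunc]
  split_ifs with h
  · rw [dInner]
    have expand : (∑ x : DTorus d n, prDisc d n c x * (starRingEnd ℂ) (charFun d k (discPt d n x)))
        = ∑ l ∈ cube d n, c l * ∑ x : DTorus d n,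
            charFun d l (discPt d n x) * (starRingEnd ℂ) (charFun d k (discPt d n x)) := by
      simp only [prDisc, Finset.sum_mul]
      rw [Finset.sum_comm]
      exact Finset.sum_congr rfl fun l _ => by
        rw [Finset.mul_sum]; exact Finset.sum_congr rfl fun x _ => by ring
    rw [expand]
    simp only [orth_x]
    have cond : ∀ l ∈ cube d n,
        (c l * if ∀ j, (2*(n:ℤ)+1) ∣ (l j - k j) then ((2*n+1:ℕ):ℂ)^d else 0)
        = if l = k then c l * ((2*n+1:ℕ):ℂ)^d else 0 := by
      intro l hl
      have hl' := (mem_cube_iff d n l).mp hl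
      by_cases hlk : l = k
      · subst hlk
        rw [if_pos rfl, if_pos fun j => by simp]
      · rw [if_neg hlk, if_neg, mul_zero]
        intro hdvd
        apply hlk
        funext j
        have := dvd_small n (l j - k j) (by have h1 := hl' j; have h2 := h j; have h3 := abs_sub (l j) (k j); omega) (hdvd j)
        omega
    rw [Finset.sum_congr rfl cond, Finset.sum_ite_eq' (cube d n) k]
    rw [if_pos ((mem_cube_iff d n k).mpr h)]
    rw [const_eq, mul_comm (c k), ← mul_assoc, inv_mul_cancel₀ (Ncd_ne d n), one_mul]
  · rfl

lemma dInner_prDisc (d n : ℕ) (f : DTorus d n → ℂ) (c : (Fin d → ℤ) → ℂ) :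
    dInner d n f (prDisc d n c) = ∑ k ∈ cube d n,
      (starRingEnd ℂ) (c k) * dInner d n f (fun x => charFun d k (discPt d n x)) := by
  simp only [dInner, prDisc, map_sum, map_mul, Finset.mul_sum, Finset.sum_mul]
  rw [Finset.sum_comm]
  exact Finset.sum_congr rfl fun k _ => Finset.sum_congr rfl fun x _ => by ring

lemma dInner_self (d n : ℕ) (f : DTorus d n → ℂ) :
    dInner d n f f = ((dNormSq d n f : ℝ) : ℂ) := by
  rw [dInner, dNormSq]
  push_cast
  congr 1
  exact Finset.sum_congr rfl fun x _ => by
    rw [Complex.mul_conj']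

lemma parseval (d n : ℕ) (f : DTorus d n → ℂ) :
    ∑ k ∈ cube d n, ‖exCoef d n f k‖^2 = dNormSq d n f := by
  have hc : ((∑ k ∈ cube d n, ‖exCoef d n f k‖^2 : ℝ) : ℂ)
      = ∑ k ∈ cube d n, (starRingEnd ℂ) (exCoef d n f k) * exCoef d n f k := by
    push_cast
    exact Finset.sum_congr rfl fun k _ => by rw [Complex.conj_mul']
  apply Complex.ofReal_injective
  rw [hc, ← dInner_self d n f]
  have hrw : dInner d n f f = dInner d n f (prDisc d n (exCoef d n f)) := by rw [part3]
  rw [hrw, dInner_prDisc]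
  exact Finset.sum_congr rfl fun k hk => by rw [exCoef_cube d n f k hk]

lemma weight_le (d n : ℕ) (J : ℝ) (k : Fin d → ℤ) (hk : ∀ j, |k j| ≤ (n:ℤ)) :
    sobWeight d J k ≤ (1 + (d:ℝ) * (n:ℝ)^2) ^ J ⊔ 1 := by
  have h0 : (0:ℝ) ≤ latNormSq d k := Finset.sum_nonneg fun j _ => sq_nonneg _
  have h1 : (1:ℝ) ≤ 1 + latNormSq d k := by linarith
  have h2 : 1 + latNormSq d k ≤ 1 + (d:ℝ) * (n:ℝ)^2 := by
    have : latNormSq d k ≤ (d:ℝ) * (n:ℝ)^2 := by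
      rw [latNormSq]
      calc ∑ j, ((k j : ℝ))^2 ≤ ∑ _j : Fin d, (n:ℝ)^2 := by
            apply Finset.sum_le_sum
            intro j _
            have : |(k j : ℝ)| ≤ (n:ℝ) := by exact_mod_cast hk j
            rw [abs_le] at this
            nlinarith
        _ = (d:ℝ) * (n:ℝ)^2 := by simp [Finset.sum_const, mul_comm]
    linarith
  rw [sobWeight]
  rcases le_or_gt 0 J with hJ | hJ
  · exact le_sup_of_le_left (Real.rpow_le_rpow (by linarith) h2 hJ)
  · exact le_sup_of_le_right (Real.rpow_le_one_of_one_le_of_nonpos h1 hJ.le)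

lemma part2 (d n : ℕ) (J : ℝ) (f : DTorus d n → ℂ) :
    sobNormSq d J (exCoef d n f) ≤ ((1 + (d:ℝ) * (n:ℝ)^2) ^ J ⊔ 1) * dNormSq d n f := by
  rw [sobNormSq]
  rw [tsum_eq_sum (s := cube d n) (f := fun k => sobWeight d J k * ‖exCoef d n f k‖^2) ?_]
  · calc ∑ k ∈ cube d n, sobWeight d J k * ‖exCoef d n f k‖^2
        ≤ ∑ k ∈ cube d n, ((1 + (d:ℝ) * (n:ℝ)^2) ^ J ⊔ 1) * ‖exCoef d n f k‖^2 := by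
          apply Finset.sum_le_sum
          intro k hk
          exact mul_le_mul_of_nonneg_right (weight_le d n J k ((mem_cube_iff d n k).mp hk))
            (sq_nonneg _)
      _ = ((1 + (d:ℝ) * (n:ℝ)^2) ^ J ⊔ 1) * ∑ k ∈ cube d n, ‖exCoef d n f k‖^2 :=
          (Finset.mul_sum _ _ _).symm
      _ = ((1 + (d:ℝ) * (n:ℝ)^2) ^ J ⊔ 1) * dNormSq d n f := by rw [parseval]
  · intro k hk
    have : exCoef d n f k = 0 := by
      rw [exCoef, if_neg]
      intro hh
      exact hk ((mem_cube_iff d n k).mpr hh)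
    rw [this]
    simp

end ExAux
/-- For every `J ∈ ℝ` and `n`, trigonometric interpolation
`ex_n : L_2(T_n^d) → H_J(T^d)` is a bounded linear operator with
`‖ex_n f‖²_{H_J} ≤ [(1+|n|²)^J ∨ 1]·‖f‖²_n` (here `|n|² = d n²` is the squared norm of
the extreme lattice vector `(n,…,n)`), and it satisfies `pr_n ∘ ex_n = id` on
`L_2(T_n^d)` and `ex_n ∘ pr_n = pr_n` on `H_J(T^d)`. -/
theorem ex_bounded_linear_and_projection_identities (d n : ℕ) (J : ℝ) :
    (∀ (f g : DTorus d n → ℂ) (a : ℂ),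
        exCoef d n (f + g) = exCoef d n f + exCoef d n g ∧
        exCoef d n (a • f) = a • exCoef d n f) ∧
    (∀ f : DTorus d n → ℂ,
        sobNormSq d J (exCoef d n f)
          ≤ ((1 + (d : ℝ) * (n : ℝ) ^ 2) ^ J ⊔ 1) * dNormSq d n f) ∧
    (∀ f : DTorus d n → ℂ, prDisc d n (exCoef d n f) = f) ∧
    (∀ c : (Fin d → ℤ) → ℂ, exCoef d n (prDisc d n c) = trunc d n c) := by
  refine ⟨fun f g a => ⟨?_, ?_⟩, ExAux.part2 d n J, ExAux.part3 d n, ExAux.part4 d n⟩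
  · funext k
    simp only [exCoef, Pi.add_apply]
    split_ifs with h
    · exact ExAux.dInner_add d n f g _
    · simp
  · funext k
    simp only [exCoef, Pi.smul_apply, smul_eq_mul]
    split_ifs with h
    · exact ExAux.dInner_smul d n a f _
    · simp

end
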